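/- Fix g > 0, α > 0, v̄ ∈ ℝ, h₀ ∈ ℝ, and define on ℝ² (with r² = x²+y²): h(x,y) = h₀ − (v̄²/(4αg)) e^{2α(1−r²)}, u_x(x,y) = −v̄ e^{α(1−r²)} y, u_y(x,y) = v̄ e^{α(1−r²)} x, q_x = h u_x, q_y = h u_y. Assume h > 0 everywhere. Then (h, q_x, q_y), taken independent of time, is a stationary solution of the two-dimensional shallow water equations with flat bottom (H constant): ∂_x q_x + ∂_y q_y = 0, ∂_x(q_x²/h + (g/2)h²) + ∂_y(q_x q_y/h) = 0, and ∂_x(q_x q_y/h) + ∂_y(q_y²/h + (g/2)h²) = 0. -/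

import Mathlib

/-- derivative of `exp (c*(1-(t^2+b)))` in `t`. -/
lemma aux_exp1 (c b x : ℝ) :
    HasDerivAt (fun t : ℝ => Real.exp (c * (1 - (t ^ 2 + b))))
      (Real.exp (c * (1 - (x ^ 2 + b))) * (-(2 * c * x))) x := by
  have h1 : HasDerivAt (fun t : ℝ => c * (1 - (t ^ 2 + b))) (-(2 * c * x)) x := by
    have := (HasDerivAt.const_sub 1 ((hasDerivAt_pow 2 x).add_const b)).const_mul c
    convert this using 1
    · rfl
    · rfl
    simp; ring
  exact h1.exp

/-- derivative of `exp (c*(1-(b+t^2)))` in `t`. -/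
lemma aux_exp2 (c b x : ℝ) :
    HasDerivAt (fun t : ℝ => Real.exp (c * (1 - (b + t ^ 2))))
      (Real.exp (c * (1 - (b + x ^ 2))) * (-(2 * c * x))) x := by
  have h1 : HasDerivAt (fun t : ℝ => c * (1 - (b + t ^ 2))) (-(2 * c * x)) x := by
    have := (HasDerivAt.const_sub 1 ((hasDerivAt_pow 2 x).const_add b)).const_mul c
    convert this using 1
    · rfl
    · rfl
    simp; ring
  exact h1.exp

/-- the smooth vortex
`h = h₀ − (v̄²/(4αg)) e^{2α(1−r²)}`, `u = v̄ e^{α(1−r²)} (−y, x)`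
is a stationary solution of the two-dimensional shallow water equations with a
flat bottom. -/
theorem vortex_is_stationary_solution
    (g α vbar h₀ : ℝ) (hg : 0 < g) (hα : 0 < α)
    (hpos : ∀ x y : ℝ,
      0 < h₀ - vbar ^ 2 / (4 * α * g) *
        Real.exp (2 * α * (1 - (x ^ 2 + y ^ 2)))) :
    let h : ℝ → ℝ → ℝ := fun x y =>
      h₀ - vbar ^ 2 / (4 * α * g) * Real.exp (2 * α * (1 - (x ^ 2 + y ^ 2)))
    let qx : ℝ → ℝ → ℝ := fun x y =>
      h x y * (-(vbar * Real.exp (α * (1 - (x ^ 2 + y ^ 2))) * y))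
    let qy : ℝ → ℝ → ℝ := fun x y =>
      h x y * (vbar * Real.exp (α * (1 - (x ^ 2 + y ^ 2))) * x)
    ∀ x y : ℝ,
      (deriv (fun x' => qx x' y) x + deriv (fun y' => qy x y') y = 0) ∧
      (deriv (fun x' => (qx x' y) ^ 2 / h x' y + g / 2 * (h x' y) ^ 2) x +
          deriv (fun y' => qx x y' * qy x y' / h x y') y = 0) ∧
      (deriv (fun x' => qx x' y * qy x' y / h x' y) x +
          deriv (fun y' => (qy x y') ^ 2 / h x y' + g / 2 * (h x y') ^ 2) y
            = 0) := by
  intro h qx qy x y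
  have hgne : g ≠ 0 := hg.ne'
  have hαne : α ≠ 0 := hα.ne'
  set c : ℝ := vbar ^ 2 / (4 * α * g) with hc
  have hne : ∀ a b : ℝ, h₀ - c * Real.exp (2 * α * (1 - (a ^ 2 + b ^ 2))) ≠ 0 :=
    fun a b => (hpos a b).ne'
  -- derivatives in the x direction
  have hEx : HasDerivAt (fun t : ℝ => Real.exp (α * (1 - (t ^ 2 + y ^ 2))))
      (Real.exp (α * (1 - (x ^ 2 + y ^ 2))) * (-(2 * α * x))) x := aux_exp1 α (y ^ 2) x
  have hE2x : HasDerivAt (fun t : ℝ => Real.exp (2 * α * (1 - (t ^ 2 + y ^ 2))))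
      (Real.exp (2 * α * (1 - (x ^ 2 + y ^ 2))) * (-(2 * (2 * α) * x))) x :=
    aux_exp1 (2 * α) (y ^ 2) x
  have hHx : HasDerivAt (fun t : ℝ => h₀ - c * Real.exp (2 * α * (1 - (t ^ 2 + y ^ 2))))
      (-(c * (Real.exp (2 * α * (1 - (x ^ 2 + y ^ 2))) * (-(2 * (2 * α) * x))))) x :=
    HasDerivAt.const_sub h₀ (hE2x.const_mul c)
  -- derivatives in the y direction
  have hEy : HasDerivAt (fun t : ℝ => Real.exp (α * (1 - (x ^ 2 + t ^ 2))))
      (Real.exp (α * (1 - (x ^ 2 + y ^ 2))) * (-(2 * α * y))) y := aux_exp2 α (x ^ 2) y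
  have hE2y : HasDerivAt (fun t : ℝ => Real.exp (2 * α * (1 - (x ^ 2 + t ^ 2))))
      (Real.exp (2 * α * (1 - (x ^ 2 + y ^ 2))) * (-(2 * (2 * α) * y))) y :=
    aux_exp2 (2 * α) (x ^ 2) y
  have hHy : HasDerivAt (fun t : ℝ => h₀ - c * Real.exp (2 * α * (1 - (x ^ 2 + t ^ 2))))
      (-(c * (Real.exp (2 * α * (1 - (x ^ 2 + y ^ 2))) * (-(2 * (2 * α) * y))))) y :=
    HasDerivAt.const_sub h₀ (hE2y.const_mul c)
  have hsq : Real.exp (2 * α * (1 - (x ^ 2 + y ^ 2))) =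
      Real.exp (α * (1 - (x ^ 2 + y ^ 2))) ^ 2 := by
    rw [show 2 * α * (1 - (x ^ 2 + y ^ 2)) =
      α * (1 - (x ^ 2 + y ^ 2)) + α * (1 - (x ^ 2 + y ^ 2)) by ring, Real.exp_add]; ring
  refine ⟨?_, ?_, ?_⟩
  · -- mass conservation
    have hQxx := hHx.mul (((hEx.const_mul vbar).mul_const y).neg)
    have hQyy := hHy.mul ((hEy.const_mul vbar).mul_const x)
    show deriv (fun x' => (h₀ - c * Real.exp (2 * α * (1 - (x' ^ 2 + y ^ 2)))) *
        (-(vbar * Real.exp (α * (1 - (x' ^ 2 + y ^ 2))) * y))) x +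
      deriv (fun y' => (h₀ - c * Real.exp (2 * α * (1 - (x ^ 2 + y' ^ 2)))) *
        (vbar * Real.exp (α * (1 - (x ^ 2 + y' ^ 2))) * x)) y = 0
    erw [hQxx.deriv, hQyy.deriv]; simp only [Pi.neg_apply, Pi.mul_apply, Pi.pow_apply, Pi.add_apply]; rw [hsq]
    ring
  · -- x momentum
    show deriv (fun x' => ((h₀ - c * Real.exp (2 * α * (1 - (x' ^ 2 + y ^ 2)))) *
        (-(vbar * Real.exp (α * (1 - (x' ^ 2 + y ^ 2))) * y))) ^ 2 /
          (h₀ - c * Real.exp (2 * α * (1 - (x' ^ 2 + y ^ 2)))) +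
        g / 2 * (h₀ - c * Real.exp (2 * α * (1 - (x' ^ 2 + y ^ 2)))) ^ 2) x +
      deriv (fun y' => (h₀ - c * Real.exp (2 * α * (1 - (x ^ 2 + y' ^ 2)))) *
          (-(vbar * Real.exp (α * (1 - (x ^ 2 + y' ^ 2))) * y')) *
          ((h₀ - c * Real.exp (2 * α * (1 - (x ^ 2 + y' ^ 2)))) *
            (vbar * Real.exp (α * (1 - (x ^ 2 + y' ^ 2))) * x)) /
          (h₀ - c * Real.exp (2 * α * (1 - (x ^ 2 + y' ^ 2))))) y = 0
    rw [show (fun x' => ((h₀ - c * Real.exp (2 * α * (1 - (x' ^ 2 + y ^ 2)))) *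
        (-(vbar * Real.exp (α * (1 - (x' ^ 2 + y ^ 2))) * y))) ^ 2 /
          (h₀ - c * Real.exp (2 * α * (1 - (x' ^ 2 + y ^ 2)))) +
        g / 2 * (h₀ - c * Real.exp (2 * α * (1 - (x' ^ 2 + y ^ 2)))) ^ 2) =
      (fun x' => (h₀ - c * Real.exp (2 * α * (1 - (x' ^ 2 + y ^ 2)))) *
          (vbar * Real.exp (α * (1 - (x' ^ 2 + y ^ 2))) * y) ^ 2 +
        g / 2 * (h₀ - c * Real.exp (2 * α * (1 - (x' ^ 2 + y ^ 2)))) ^ 2)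
      from funext fun t => by field_simp [hne t y]]
    rw [show (fun y' => (h₀ - c * Real.exp (2 * α * (1 - (x ^ 2 + y' ^ 2)))) *
          (-(vbar * Real.exp (α * (1 - (x ^ 2 + y' ^ 2))) * y')) *
          ((h₀ - c * Real.exp (2 * α * (1 - (x ^ 2 + y' ^ 2)))) *
            (vbar * Real.exp (α * (1 - (x ^ 2 + y' ^ 2))) * x)) /
          (h₀ - c * Real.exp (2 * α * (1 - (x ^ 2 + y' ^ 2))))) =
      (fun y' => (h₀ - c * Real.exp (2 * α * (1 - (x ^ 2 + y' ^ 2)))) *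
          (vbar * Real.exp (α * (1 - (x ^ 2 + y' ^ 2)))) ^ 2 * (-(x * y')))
      from funext fun t => by field_simp [hne x t]]
    have hA := (hHx.mul (((hEx.const_mul vbar).mul_const y).pow 2)).add
      ((hHx.pow 2).const_mul (g / 2))
    have hB := (hHy.mul ((hEy.const_mul vbar).pow 2)).mul
      (((hasDerivAt_id' (x := y)).const_mul x).neg)
    erw [hA.deriv, hB.deriv]; simp only [Pi.neg_apply, Pi.mul_apply, Pi.pow_apply, Pi.add_apply]; rw [hsq, hc]
    norm_num
    field_simp
    ring
  · -- y momentum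
    show deriv (fun x' => (h₀ - c * Real.exp (2 * α * (1 - (x' ^ 2 + y ^ 2)))) *
          (-(vbar * Real.exp (α * (1 - (x' ^ 2 + y ^ 2))) * y)) *
          ((h₀ - c * Real.exp (2 * α * (1 - (x' ^ 2 + y ^ 2)))) *
            (vbar * Real.exp (α * (1 - (x' ^ 2 + y ^ 2))) * x')) /
          (h₀ - c * Real.exp (2 * α * (1 - (x' ^ 2 + y ^ 2))))) x +
      deriv (fun y' => ((h₀ - c * Real.exp (2 * α * (1 - (x ^ 2 + y' ^ 2)))) *
          (vbar * Real.exp (α * (1 - (x ^ 2 + y' ^ 2))) * x)) ^ 2 /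
          (h₀ - c * Real.exp (2 * α * (1 - (x ^ 2 + y' ^ 2)))) +
        g / 2 * (h₀ - c * Real.exp (2 * α * (1 - (x ^ 2 + y' ^ 2)))) ^ 2) y = 0
    rw [show (fun x' => (h₀ - c * Real.exp (2 * α * (1 - (x' ^ 2 + y ^ 2)))) *
          (-(vbar * Real.exp (α * (1 - (x' ^ 2 + y ^ 2))) * y)) *
          ((h₀ - c * Real.exp (2 * α * (1 - (x' ^ 2 + y ^ 2)))) *
            (vbar * Real.exp (α * (1 - (x' ^ 2 + y ^ 2))) * x')) /
          (h₀ - c * Real.exp (2 * α * (1 - (x' ^ 2 + y ^ 2))))) =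
      (fun x' => (h₀ - c * Real.exp (2 * α * (1 - (x' ^ 2 + y ^ 2)))) *
          (vbar * Real.exp (α * (1 - (x' ^ 2 + y ^ 2)))) ^ 2 * (-(y * x')))
      from funext fun t => by field_simp [hne t y]]
    rw [show (fun y' => ((h₀ - c * Real.exp (2 * α * (1 - (x ^ 2 + y' ^ 2)))) *
          (vbar * Real.exp (α * (1 - (x ^ 2 + y' ^ 2))) * x)) ^ 2 /
          (h₀ - c * Real.exp (2 * α * (1 - (x ^ 2 + y' ^ 2)))) +
        g / 2 * (h₀ - c * Real.exp (2 * α * (1 - (x ^ 2 + y' ^ 2)))) ^ 2) =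
      (fun y' => (h₀ - c * Real.exp (2 * α * (1 - (x ^ 2 + y' ^ 2)))) *
          (vbar * Real.exp (α * (1 - (x ^ 2 + y' ^ 2))) * x) ^ 2 +
        g / 2 * (h₀ - c * Real.exp (2 * α * (1 - (x ^ 2 + y' ^ 2)))) ^ 2)
      from funext fun t => by field_simp [hne x t]]
    have hA := (hHx.mul ((hEx.const_mul vbar).pow 2)).mul
      (((hasDerivAt_id' (x := x)).const_mul y).neg)
    have hB := (hHy.mul (((hEy.const_mul vbar).mul_const x).pow 2)).add
      ((hHy.pow 2).const_mul (g / 2))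
    erw [hA.deriv, hB.deriv]; simp only [Pi.neg_apply, Pi.mul_apply, Pi.pow_apply, Pi.add_apply]; rw [hsq, hc]
    norm_num
    field_simp
    ring
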